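/- For any $\sigma > 0$ and $\theta \in [0, 2\pi)$, the norm of the Brownian shift $B_{\sigma, e^{i\theta}}$ restricted to a nonzero Type I invariant subspace $\varphi H^2(\mathbb{T}) \oplus \{0\}$ (with $\varphi$ inner) equals $1$, whereas for any nonzero element $(g, y)$ of $\mathcal{G}_\Phi$ (which necessarily has $y \ne 0$), one has $\|B_{\sigma, e^{i\theta}}(g, y)\|^2 = \|(g, y)\|^2 + \sigma^2\|y\|^2 > \|(g, y)\|^2$. Consequently, the restriction of a Brownian shift to a Type I invariant subspace is never unitarily equivalent to the restriction of a Brownian shift to a Type II invariant subspace. -/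

import Mathlib

open Complex

noncomputable section
set_option linter.unusedSectionVars false

/-- The `E`-valued Hardy space `H²_E(𝕋)`, modeled by the ℓ² space of its
Taylor/Fourier coefficient sequences. -/
abbrev Hardy (E : Type*) [NormedAddCommGroup E] [InnerProductSpace ℂ E] [CompleteSpace E] :=
  lp (fun _ : ℕ => E) 2

variable {E : Type*} [NormedAddCommGroup E] [InnerProductSpace ℂ E] [CompleteSpace E]

def shiftSeq (f : ℕ → E) : ℕ → E
  | 0 => 0
  | n + 1 => f n

lemma memℓp_shiftSeq {f : ℕ → E} (hf : Memℓp f 2) : Memℓp (shiftSeq f) 2 := by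
  have h := hf.summable (by norm_num)
  exact memℓp_gen ((summable_nat_add_iff 1).mp (by simpa [shiftSeq] using h))

/-- The shift `S_E : f ↦ z f` on `H²_E(𝕋)`. -/
def shiftOp (f : Hardy E) : Hardy E := ⟨shiftSeq f, memℓp_shiftSeq (lp.memℓp f)⟩

/-- The inclusion `i_E : E → H²_E(𝕋)` sending `x` to the constant function `x`. -/
def inclOp (y : E) : Hardy E := lp.single 2 (0 : ℕ) y

/-- The Brownian shift `B^E_{σ, e^{iθ}}` of covariance `σ` and angle `θ` on
`H²_E(𝕋) ⊕ E`: `(f, y) ↦ (zf + σ y, e^{iθ} y)`. -/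
def BS (σ θ : ℝ) (v : Hardy E × E) : Hardy E × E :=
  (shiftOp v.1 + (σ : ℂ) • inclOp v.2, Complex.exp (θ * I) • v.2)

/-- The Hilbert space direct sum `H²_E(𝕋) ⊕ E` (with the ℓ²-norm on the pair). -/
abbrev HardyPair (E : Type*) [NormedAddCommGroup E] [InnerProductSpace ℂ E] [CompleteSpace E] :=
  WithLp 2 (Hardy E × E)

/-- Build an element of `H²_E(𝕋) ⊕ E` from its two components. -/
def mkPair (f : Hardy E) (y : E) : HardyPair E := (WithLp.equiv 2 (Hardy E × E)).symm (f, y)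

/-- First component of an element of `H²_E(𝕋) ⊕ E`. -/
def pr1 (v : HardyPair E) : Hardy E := (WithLp.equiv 2 (Hardy E × E) v).1

/-- Second component of an element of `H²_E(𝕋) ⊕ E`. -/
def pr2 (v : HardyPair E) : E := (WithLp.equiv 2 (Hardy E × E) v).2

/-- The Brownian shift `B^E_{σ, e^{iθ}}` on the Hilbert space `H²_E(𝕋) ⊕ E`:
`(f, y) ↦ (zf + σy, e^{iθ} y)`. -/
def BW (σ θ : ℝ) (v : HardyPair E) : HardyPair E :=
  mkPair (shiftOp (pr1 v) + (σ : ℂ) • inclOp (pr2 v)) (Complex.exp (θ * I) • pr2 v)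


section Aux

variable {E : Type*} [NormedAddCommGroup E] [InnerProductSpace ℂ E] [CompleteSpace E]

lemma inner_shiftOp_self' (f : Hardy E) :
    (inner ℂ (shiftOp f) (shiftOp f) : ℂ) = inner ℂ f f := by
  rw [lp.inner_eq_tsum, lp.inner_eq_tsum,
    Summable.tsum_eq_zero_add (lp.summable_inner (𝕜 := ℂ) (shiftOp f) (shiftOp f))]
  have h0 : (inner ℂ ((shiftOp f) 0) ((shiftOp f) 0) : ℂ) = 0 := by
    show (inner ℂ (shiftSeq f 0) (shiftSeq f 0) : ℂ) = 0
    simp [shiftSeq]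
  rw [h0, zero_add]
  rfl

lemma norm_shiftOp' (f : Hardy E) : ‖shiftOp f‖ = ‖f‖ := by
  rw [norm_eq_sqrt_re_inner (𝕜 := ℂ), norm_eq_sqrt_re_inner (𝕜 := ℂ), inner_shiftOp_self']

lemma inner_shiftOp_inclOp' (f : Hardy E) (y : E) :
    (inner ℂ (shiftOp f) (inclOp y) : ℂ) = 0 := by
  rw [inclOp, lp.inner_single_right]
  show (inner ℂ (shiftSeq f 0) y : ℂ) = 0
  simp [shiftSeq]

lemma norm_inclOp' (y : E) : ‖(inclOp y : Hardy E)‖ = ‖y‖ := by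
  exact lp.norm_single (E := fun _ : ℕ => E) (p := 2) (by norm_num) 0 y

lemma mkPair_pr (v : HardyPair E) : mkPair (pr1 v) (pr2 v) = v := rfl

lemma norm_mkPair_sq (g : Hardy E) (y : E) : ‖mkPair g y‖ ^ 2 = ‖g‖ ^ 2 + ‖y‖ ^ 2 :=
  WithLp.prod_norm_sq_eq_of_L2 (mkPair g y)

lemma norm_shift_add_incl_sq (σ : ℝ) (g : Hardy E) (y : E) :
    ‖shiftOp g + (σ : ℂ) • inclOp y‖ ^ 2 = ‖g‖ ^ 2 + σ ^ 2 * ‖y‖ ^ 2 := by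
  have h : (inner ℂ (shiftOp g) ((σ : ℂ) • inclOp y) : ℂ) = 0 := by
    rw [inner_smul_right, inner_shiftOp_inclOp', mul_zero]
  have h2 := norm_add_sq_eq_norm_sq_add_norm_sq_of_inner_eq_zero _ _ h
  have h3 : ‖(σ : ℂ) • (inclOp y : Hardy E)‖ = |σ| * ‖y‖ := by
    rw [norm_smul, norm_inclOp', Complex.norm_real, Real.norm_eq_abs]
  rw [pow_two, h2, norm_shiftOp', h3]
  have : |σ| * |σ| = σ ^ 2 := by rw [← abs_mul, abs_mul_self, pow_two]
  ring_nf
  nlinarith [this]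

lemma BW_mkPair (σ θ : ℝ) (g : Hardy E) (y : E) :
    BW σ θ (mkPair g y)
      = mkPair (shiftOp g + (σ : ℂ) • inclOp y) (Complex.exp (θ * I) • y) := rfl

lemma BW_norm_sq (σ θ : ℝ) (g : Hardy E) (y : E) :
    ‖BW σ θ (mkPair g y)‖ ^ 2 = ‖mkPair g y‖ ^ 2 + σ ^ 2 * ‖y‖ ^ 2 := by
  rw [BW_mkPair, norm_mkPair_sq, norm_mkPair_sq, norm_shift_add_incl_sq]
  have : ‖Complex.exp (θ * I) • y‖ = ‖y‖ := by
    rw [norm_smul, Complex.norm_exp_ofReal_mul_I, one_mul]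
  rw [this]
  ring

lemma BW_norm_of_pr2_zero (σ θ : ℝ) (v : HardyPair E) (hv : pr2 v = 0) :
    ‖BW σ θ v‖ = ‖v‖ := by
  have h := BW_norm_sq (E := E) σ θ (pr1 v) (pr2 v)
  rw [mkPair_pr, hv] at h
  simp only [norm_zero] at h
  have h' : ‖BW σ θ v‖ ^ 2 = ‖v‖ ^ 2 := by rw [h]; ring
  nlinarith [norm_nonneg (BW σ θ v), norm_nonneg v]

end Aux

/-- The restriction of a Brownian shift to a nonzero Type I invariant subspace is an
isometry (hence has norm 1), while on nonzero vectors of `𝒢_Ψ` the Brownian shift strictly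
increases the norm: `‖B(g,y)‖² = ‖(g,y)‖² + σ²‖y‖²`. Consequently the restriction of a
Brownian shift to a Type I invariant subspace is never unitarily equivalent to the
restriction of a Brownian shift to a Type II invariant subspace. -/
theorem typeI_not_equivalent_typeII
    (σ₁ σ₂ θ₁ θ₂ : ℝ) (hσ₁ : 0 < σ₁) (hσ₂ : 0 < σ₂)
    (hθ₁ : θ₁ ∈ Set.Ico 0 (2 * Real.pi)) (hθ₂ : θ₂ ∈ Set.Ico 0 (2 * Real.pi)) :
    (∀ M₁ : Submodule ℂ (HardyPair ℂ), IsClosed (M₁ : Set (HardyPair ℂ)) →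
      (∀ v ∈ M₁, BW σ₁ θ₁ v ∈ M₁) → (∀ v ∈ M₁, pr2 v = 0) →
      ∀ v ∈ M₁, ‖BW σ₁ θ₁ v‖ = ‖v‖) ∧
    (∀ T : Hardy ℂ →L[ℂ] Hardy ℂ, (∀ h : Hardy ℂ, ‖T h‖ = ‖h‖) →
      (∀ h : Hardy ℂ, T (shiftOp h) = shiftOp (T h)) →
      ∀ (g : Hardy ℂ) (y x : ℂ),
        shiftOp g + (σ₂ : ℂ) • inclOp y = Complex.exp (θ₂ * I) • g + T (inclOp x) →
        ¬(g = 0 ∧ y = 0) →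
        ‖BW σ₂ θ₂ (mkPair g y)‖ ^ 2 = ‖mkPair g y‖ ^ 2 + σ₂ ^ 2 * ‖y‖ ^ 2) ∧
    (∀ M₁ M₂ : Submodule ℂ (HardyPair ℂ),
      IsClosed (M₁ : Set (HardyPair ℂ)) → IsClosed (M₂ : Set (HardyPair ℂ)) →
      M₁ ≠ ⊥ →
      ∀ h₁ : ∀ v ∈ M₁, BW σ₁ θ₁ v ∈ M₁,
      (∀ v ∈ M₁, pr2 v = 0) →
      (∀ v ∈ M₂, BW σ₂ θ₂ v ∈ M₂) →
      (∃ v ∈ M₂, pr2 v ≠ 0) →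
      ¬ ∃ U : M₁ ≃ₗᵢ[ℂ] M₂,
        ∀ (v : HardyPair ℂ) (hv : v ∈ M₁),
          ((U ⟨BW σ₁ θ₁ v, h₁ v hv⟩ : M₂) : HardyPair ℂ) =
            BW σ₂ θ₂ ((U ⟨v, hv⟩ : M₂) : HardyPair ℂ)) := by
  refine ⟨fun M₁ _ _ hpr2 v hv => BW_norm_of_pr2_zero σ₁ θ₁ v (hpr2 v hv),
    fun T _ _ g y x _ _ => BW_norm_sq σ₂ θ₂ g y, ?_⟩
  intro M₁ M₂ _ _ _ h₁ hpr2₁ h₂ ⟨w, hw, hw2⟩ ⟨U, hU⟩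
  set u : M₁ := U.symm ⟨w, hw⟩ with hu
  have hUu : U u = ⟨w, hw⟩ := U.apply_symm_apply ⟨w, hw⟩
  have key := hU u.val u.prop
  have hcoe : ((U ⟨u.val, u.prop⟩ : M₂) : HardyPair ℂ) = w := by
    rw [Subtype.coe_eta, hUu]
  rw [hcoe] at key
  -- ‖BW σ₂ θ₂ w‖ = ‖w‖
  have hnorm : ‖BW σ₂ θ₂ w‖ = ‖w‖ := by
    calc ‖BW σ₂ θ₂ w‖ = ‖(U ⟨BW σ₁ θ₁ u.val, h₁ u.val u.prop⟩ : M₂)‖ := by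
          rw [← key]; rfl
      _ = ‖BW σ₁ θ₁ u.val‖ := by rw [U.norm_map]; rfl
      _ = ‖u.val‖ := BW_norm_of_pr2_zero σ₁ θ₁ u.val (hpr2₁ u.val u.prop)
      _ = ‖(U u : M₂)‖ := by rw [U.norm_map]; rfl
      _ = ‖w‖ := by rw [hUu]; rfl
  have hsq := BW_norm_sq σ₂ θ₂ (pr1 w) (pr2 w)
  rw [mkPair_pr] at hsq
  have hy : 0 < σ₂ ^ 2 * ‖pr2 w‖ ^ 2 := by
    have : 0 < ‖pr2 w‖ := norm_pos_iff.mpr hw2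
    positivity
  rw [hnorm] at hsq
  nlinarith
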